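/- Let $N\geq3$, $q>1$, and suppose either ($\lambda>(N-2)^2/4$ and $\theta\in\mathbb{R}$) or ($\lambda\leq(N-2)^2/4$ and $\theta<p_-(q-1)-2$ where $p_-=\frac{N-2}{2}-\sqrt{(N-2)^2/4-\lambda}$). Set $\Theta=(\theta+2)/(q-1)$ and $\ell=\Theta^2-(N-2)\Theta+\lambda>0$. Then there exist $\alpha\in(0,1)$ and $c_\alpha>0$, depending only on $N,q,\theta,\lambda$, such that for every $c\in(0,c_\alpha)$ and every $\delta>0$, the function $w_\delta(x)=c\,\ell^{1/(q-1)}|x|^{-\Theta}\left[1-(\delta/|x|)^\alpha\right]^{1/\sqrt{\alpha}}$ satisfies $-\Delta w_\delta-\lambda|x|^{-2}w_\delta+|x|^\theta w_\delta^q\leq 0$ for every $|x|>\delta$. -/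

import Mathlib

open scoped BigOperators

noncomputable def lap {N : ℕ} (u : EuclideanSpace ℝ (Fin N) → ℝ)
    (x : EuclideanSpace ℝ (Fin N)) : ℝ :=
  ∑ i : Fin N, fderiv ℝ (fun y => fderiv ℝ u y (EuclideanSpace.single i 1)) x
    (EuclideanSpace.single i 1)

lemma sum_sq_eq (N : ℕ) (x : EuclideanSpace ℝ (Fin N)) :
    ∑ i : Fin N, x i ^ 2 = ‖x‖ ^ 2 := by
  rw [EuclideanSpace.norm_eq, Real.sq_sqrt (by positivity)]
  simp [sq_abs]

lemma lap_radial {N : ℕ} (g g1 g2 : ℝ → ℝ) (b : ℝ)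
    (hg : ∀ t, b < t → HasDerivAt g (g1 t) t)
    (hg1 : ∀ t, b < t → HasDerivAt g1 (g2 t) t)
    (x : EuclideanSpace ℝ (Fin N)) (hx : b < ‖x‖ ^ 2) :
    lap (fun y => g (‖y‖ ^ 2)) x
      = 4 * ‖x‖ ^ 2 * g2 (‖x‖ ^ 2) + 2 * N * g1 (‖x‖ ^ 2) := by
  have hUopen : IsOpen {y : EuclideanSpace ℝ (Fin N) | b < ‖y‖ ^ 2} :=
    isOpen_lt continuous_const (by fun_prop)
  have hU : ∀ y ∈ {y : EuclideanSpace ℝ (Fin N) | b < ‖y‖ ^ 2},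
      HasFDerivAt (fun z => g (‖z‖ ^ 2))
        (g1 (‖y‖ ^ 2) • ((2:ℕ) • (innerSL ℝ y))) y := fun y hy =>
    (hg _ hy).comp_hasFDerivAt y (hasStrictFDerivAt_norm_sq y).hasFDerivAt
  have key : ∀ i : Fin N,
      fderiv ℝ (fun y => fderiv ℝ (fun z => g (‖z‖ ^ 2)) y (EuclideanSpace.single i 1)) x
        (EuclideanSpace.single i 1)
      = 4 * (x i)^2 * g2 (‖x‖ ^ 2) + 2 * g1 (‖x‖ ^ 2) := by
    intro i
    set e : EuclideanSpace ℝ (Fin N) := EuclideanSpace.single i 1 with he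
    have hee : (inner ℝ e e : ℝ) = 1 := by
      simp [he, EuclideanSpace.inner_single_right, EuclideanSpace.single_apply]
    have hxe : (inner ℝ x e : ℝ) = x i := by
      simp [he, EuclideanSpace.inner_single_right]
    have hex : (inner ℝ e x : ℝ) = x i := by rw [real_inner_comm]; exact hxe
    have heq : (fun y => fderiv ℝ (fun z => g (‖z‖ ^ 2)) y e)
        =ᶠ[nhds x] (fun y => g1 (‖y‖ ^ 2) * (2 * (innerSL ℝ e) y)) := by
      filter_upwards [hUopen.mem_nhds hx] with y hy
      rw [(hU y hy).fderiv]
      simp only [ContinuousLinearMap.smul_apply, ContinuousLinearMap.coe_smul',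
        Pi.smul_apply, innerSL_apply_apply, smul_eq_mul]
      rw [real_inner_comm]
      ring
    have hF : HasFDerivAt (fun y : EuclideanSpace ℝ (Fin N) =>
        g1 (‖y‖ ^ 2) * (2 * (innerSL ℝ e) y))
        ((g1 (‖x‖ ^ 2)) • ((2:ℝ) • (innerSL ℝ e)) +
          (2 * (innerSL ℝ e) x) • (g2 (‖x‖ ^ 2) • ((2:ℕ) • (innerSL ℝ x)))) x := by
      exact ((hg1 _ hx).comp_hasFDerivAt x
        (hasStrictFDerivAt_norm_sq x).hasFDerivAt).mul
        ((innerSL ℝ e).hasFDerivAt.const_mul 2) |>.congr_fderiv (by ext z; simp)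
    rw [heq.fderiv_eq, hF.fderiv]
    simp only [ContinuousLinearMap.add_apply, ContinuousLinearMap.smul_apply,
      ContinuousLinearMap.coe_smul', Pi.smul_apply, innerSL_apply_apply, smul_eq_mul]
    rw [hee, hex, hxe]
    ring
  unfold lap
  rw [Finset.sum_congr rfl (fun i _ => key i), Finset.sum_add_distrib]
  have h1 : ∑ i : Fin N, 4 * (x i)^2 * g2 (‖x‖ ^ 2) = 4 * ‖x‖^2 * g2 (‖x‖^2) := by
    rw [← Finset.sum_mul, ← Finset.mul_sum, sum_sq_eq]
  have h2 : ∑ _i : Fin N, 2 * g1 (‖x‖ ^ 2) = 2 * N * g1 (‖x‖^2) := by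
    rw [Finset.sum_const]
    simp; ring
  rw [h1, h2]

noncomputable def M (A m a b : ℝ) : ℝ → ℝ := fun u => u ^ a * (1 - A * u ^ (-m)) ^ b

lemma hasDerivAt_M (A m a b t : ℝ) (ht : 0 < t) (hB : 1 - A * t ^ (-m) ≠ 0) :
    HasDerivAt (M A m a b)
      (a * M A m (a-1) b t + A * m * b * M A m (a-m-1) (b-1) t) t := by
  have h1 : HasDerivAt (fun u : ℝ => u ^ a) (a * t ^ (a-1)) t :=
    Real.hasDerivAt_rpow_const (Or.inl ht.ne')
  have h2 : HasDerivAt (fun u : ℝ => 1 - A * u ^ (-m)) (A * m * t ^ (-m-1)) t := by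
    have h0 : HasDerivAt (fun u : ℝ => u ^ (-m)) (-m * t ^ (-m-1)) t :=
      Real.hasDerivAt_rpow_const (Or.inl ht.ne')
    have := (h0.const_mul A).const_sub 1
    refine this.congr_deriv ?_; ring
  have h3 := h2.rpow_const (p := b) (Or.inl hB)
  have h4 := h1.mul h3
  have hsplit : t ^ a * t ^ (-m-1) = t ^ (a-m-1) := by
    rw [← Real.rpow_add ht]; ring_nf
  unfold M
  refine h4.congr_deriv ?_
  rw [← hsplit]; ring

lemma base_pos (δ α t : ℝ) (hδ : 0 < δ) (hα : 0 < α) (ht : δ ^ 2 < t) :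
    0 < 1 - δ ^ α * t ^ (-(α/2)) := by
  have ht0 : (0:ℝ) < t := lt_of_le_of_lt (sq_nonneg δ) ht
  have h1 : δ ^ α < t ^ (α/2) := by
    have : (δ ^ 2 : ℝ) ^ (α/2) < t ^ (α/2) :=
      Real.rpow_lt_rpow (sq_nonneg δ) ht (by positivity)
    calc δ ^ α = (δ ^ 2 : ℝ) ^ (α/2) := by
          rw [← Real.rpow_natCast δ 2, ← Real.rpow_mul hδ.le]
          norm_num
          rw [show (2:ℝ) * (α / 2) = α by ring]
      _ < t ^ (α/2) := this
  have h2 : t ^ (-(α/2)) = (t ^ (α/2))⁻¹ := Real.rpow_neg ht0.le _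
  have h3 : (0:ℝ) < t ^ (α/2) := Real.rpow_pos_of_pos ht0 _
  rw [h2, sub_pos, ← div_eq_mul_inv, div_lt_one h3]
  exact h1

noncomputable def g1fun (C A m P β : ℝ) : ℝ → ℝ := fun u =>
  C * (P * M A m (P-1) β u + A*m*β * M A m (P-m-1) (β-1) u)

noncomputable def g2fun (C A m P β : ℝ) : ℝ → ℝ := fun u =>
  C * (P * ((P-1) * M A m (P-1-1) β u + A*m*β * M A m (P-1-m-1) (β-1) u)
     + (A*m*β) * ((P-m-1) * M A m (P-m-1-1) (β-1) u + A*m*(β-1) * M A m (P-m-1-m-1) (β-1-1) u))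


lemma hasDerivAt_g (C A m P β t : ℝ) (ht : 0 < t) (hB : 1 - A * t ^ (-m) ≠ 0) :
    HasDerivAt (fun u => C * M A m P β u) (g1fun C A m P β t) t :=
  (hasDerivAt_M A m P β t ht hB).const_mul C

lemma hasDerivAt_g1 (C A m P β t : ℝ) (ht : 0 < t) (hB : 1 - A * t ^ (-m) ≠ 0) :
    HasDerivAt (g1fun C A m P β) (g2fun C A m P β t) t := by
  have h1 := (hasDerivAt_M A m (P-1) β t ht hB).const_mul P
  have h2 := (hasDerivAt_M A m (P-m-1) (β-1) t ht hB).const_mul (A*m*β)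
  exact ((h1.add h2).const_mul C)

lemma Meval (A m a b r α : ℝ) (hr : 0 < r) (hm : m = α/2) :
    M A m a b (r^2) = r^(2*a) * (1 - A * r^(-α))^b := by
  unfold M
  congr 1
  · rw [← Real.rpow_natCast r 2, ← Real.rpow_mul hr.le]
    norm_num
  · have h : ((r:ℝ)^2)^(-m) = r^(-α) := by
      rw [← Real.rpow_natCast r 2, ← Real.rpow_mul hr.le, hm]
      congr 1; push_cast; ring
    rw [h]

lemma lap_eval (N : ℕ) (C Θ α β δ r : ℝ) (hδ : 0 < δ) (hr : δ < r) (hα : 0 < α)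
    (hβ : β = 1 / Real.sqrt α) :
    4*r^2 * g2fun C (δ^α) (α/2) (-Θ/2) β (r^2) + 2*N * g1fun C (δ^α) (α/2) (-Θ/2) β (r^2)
     = C * r^(-Θ-2) * ((Θ^2-((N:ℝ)-2)*Θ) * (1 - δ^α*r^(-α))^β
        + Real.sqrt α*((N:ℝ)-2-2*Θ-α) * (δ^α*r^(-α)) * (1 - δ^α*r^(-α))^(β-1)
        + α*(1-Real.sqrt α) * (δ^α*r^(-α))^2 * (1 - δ^α*r^(-α))^(β-2)) := by
  have hr0 : (0:ℝ) < r := hδ.trans hr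
  set A := δ^α
  set B := 1 - A * r^(-α) with hB
  set P : ℝ := -Θ/2 with hP
  set m : ℝ := α/2 with hm
  have e1 : M A m (P-1) β (r^2) = r^(-Θ-2) * B^β := by
    rw [Meval A m _ _ r α hr0 hm, show 2*(P-1) = -Θ-2 by rw [hP]; ring]
  have e2 : M A m (P-m-1) (β-1) (r^2) = r^(-Θ-2) * r^(-α) * B^(β-1) := by
    rw [Meval A m _ _ r α hr0 hm, show 2*(P-m-1) = (-Θ-2) + (-α) by rw [hP, hm]; ring,
      Real.rpow_add hr0]
  have e3 : M A m (P-1-1) β (r^2) = r^(-Θ-2) * r^(-(2:ℝ)) * B^β := by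
    rw [Meval A m _ _ r α hr0 hm, show 2*(P-1-1) = (-Θ-2) + (-(2:ℝ)) by rw [hP]; ring,
      Real.rpow_add hr0]
  have e4 : M A m (P-1-m-1) (β-1) (r^2) = r^(-Θ-2) * r^(-α) * r^(-(2:ℝ)) * B^(β-1) := by
    rw [Meval A m _ _ r α hr0 hm,
      show 2*(P-1-m-1) = ((-Θ-2) + (-α)) + (-(2:ℝ)) by rw [hP, hm]; ring,
      Real.rpow_add hr0, Real.rpow_add hr0]
  have e5 : M A m (P-m-1-1) (β-1) (r^2) = r^(-Θ-2) * r^(-α) * r^(-(2:ℝ)) * B^(β-1) := by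
    rw [Meval A m _ _ r α hr0 hm,
      show 2*(P-m-1-1) = ((-Θ-2) + (-α)) + (-(2:ℝ)) by rw [hP, hm]; ring,
      Real.rpow_add hr0, Real.rpow_add hr0]
  have e6 : M A m (P-m-1-m-1) (β-1-1) (r^2) = r^(-Θ-2) * r^(-α) * r^(-α) * r^(-(2:ℝ)) * B^(β-1-1) := by
    rw [Meval A m _ _ r α hr0 hm,
      show 2*(P-m-1-m-1) = (((-Θ-2) + (-α)) + (-α)) + (-(2:ℝ)) by rw [hP, hm]; ring,
      Real.rpow_add hr0, Real.rpow_add hr0, Real.rpow_add hr0]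
  have hw : r^(-(2:ℝ)) = (r^2)⁻¹ := by
    rw [Real.rpow_neg hr0.le, Real.rpow_two]
  have hsa : Real.sqrt α * Real.sqrt α = α := Real.mul_self_sqrt hα.le
  have hsa0 : Real.sqrt α ≠ 0 := by positivity
  have hb2 : B^(β-2) = B^(β-1-1) := by rw [show β-1-1 = β-2 by ring]
  unfold g1fun g2fun
  rw [e1, e2, e3, e4, e5, e6, hw, hb2]
  set sa := Real.sqrt α with hsadef
  rw [hP, hm, hβ, ← hsa]
  have hr2 : (r:ℝ)^2 ≠ 0 := by positivity
  field_simp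
  ring

lemma funeq (N : ℕ) (C Θ α δ : ℝ) (hδ : 0 < δ) (hα : 0 < α) :
    (fun y : EuclideanSpace ℝ (Fin N) =>
        C * ‖y‖ ^ (-Θ) * (1 - (δ / ‖y‖) ^ α) ^ (1 / Real.sqrt α))
      = fun y => C * M (δ^α) (α/2) (-Θ/2) (1 / Real.sqrt α) (‖y‖^2) := by
  funext y
  unfold M
  rcases eq_or_lt_of_le (norm_nonneg y) with h0 | hpos
  · rw [← h0]
    rw [div_zero, Real.zero_rpow hα.ne', sub_zero, Real.one_rpow]
    have h2 : ((0:ℝ)^2 : ℝ) = 0 := by norm_num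
    rw [h2, Real.zero_rpow (neg_ne_zero.mpr (by positivity : (α/2) ≠ 0))]
    rw [mul_zero, sub_zero, Real.one_rpow, mul_one, mul_one]
    by_cases hΘ0 : Θ = 0
    · rw [hΘ0]; norm_num
    · rw [Real.zero_rpow (neg_ne_zero.mpr hΘ0),
        Real.zero_rpow (by simpa using div_ne_zero (neg_ne_zero.mpr hΘ0) (two_ne_zero) : -Θ/2 ≠ 0)]
  · set r := ‖y‖ with hr
    have hP : (r^2 : ℝ)^(-Θ/2) = r^(-Θ) := by
      rw [← Real.rpow_natCast r 2, ← Real.rpow_mul hpos.le]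
      congr 1; push_cast; ring
    have hm : (r^2 : ℝ)^(-(α/2)) = r^(-α) := by
      rw [← Real.rpow_natCast r 2, ← Real.rpow_mul hpos.le]
      congr 1; push_cast; ring
    have hs : (δ/r)^α = δ^α * r^(-α) := by
      rw [Real.div_rpow hδ.le hpos.le, Real.rpow_neg hpos.le, div_eq_mul_inv]
    rw [hP, hm, hs]
    ring

set_option maxHeartbeats 1000000 in
lemma main_est (N : ℕ) (q θ lam Θ ℓ α c δ : ℝ) (hq : 1 < q)
    (hΘ : Θ = (θ+2)/(q-1)) (hℓ : ℓ = Θ^2 - ((N:ℝ)-2)*Θ + lam) (hℓpos : 0 < ℓ)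
    (hα : 0 < α) (hα1 : α < 1) (hc : 0 < c) (hδ : 0 < δ)
    (hquad : ∀ B s : ℝ, 0 ≤ B → 0 ≤ s →
      0 ≤ (1 - c^(q-1))*ℓ*B^2 + Real.sqrt α * (((N:ℝ)-2-2*Θ-α))*s*B
          + α*(1-Real.sqrt α)*s^2)
    (x : EuclideanSpace ℝ (Fin N)) (hx : δ < ‖x‖) :
    -lap (fun y => c * ℓ ^ (1 / (q - 1)) * ‖y‖ ^ (-Θ)
          * (1 - (δ / ‖y‖) ^ α) ^ (1 / Real.sqrt α)) x
      - lam / ‖x‖ ^ 2 * (c * ℓ ^ (1 / (q - 1)) * ‖x‖ ^ (-Θ)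
          * (1 - (δ / ‖x‖) ^ α) ^ (1 / Real.sqrt α))
      + ‖x‖ ^ θ * (c * ℓ ^ (1 / (q - 1)) * ‖x‖ ^ (-Θ)
          * (1 - (δ / ‖x‖) ^ α) ^ (1 / Real.sqrt α)) ^ q ≤ 0 := by
  have hq1 : q - 1 ≠ 0 := by linarith
  set C : ℝ := c * ℓ ^ (1 / (q - 1)) with hC
  have hC0 : 0 < C := by
    have := Real.rpow_pos_of_pos hℓpos (1/(q-1)); positivity
  set r : ℝ := ‖x‖ with hrdef
  have hr0 : (0:ℝ) < r := hδ.trans hx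
  set β : ℝ := 1 / Real.sqrt α with hβ
  have hsa0 : (0:ℝ) < Real.sqrt α := Real.sqrt_pos.mpr hα
  have hsa1 : Real.sqrt α ≤ 1 := by
    rw [show (1:ℝ) = Real.sqrt 1 by simp]
    exact Real.sqrt_le_sqrt hα1.le
  have hβ0 : 0 < β := by rw [hβ]; positivity
  set s : ℝ := δ^α * r^(-α) with hs
  set B : ℝ := 1 - s with hBdef
  have hs0 : 0 < s := by
    have := Real.rpow_pos_of_pos hδ α
    have := Real.rpow_pos_of_pos hr0 (-α)
    positivity
  have hs1 : s < 1 := by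
    have h1 : δ^α < r^α := Real.rpow_lt_rpow hδ.le hx hα
    have h2 : r^(-α) = (r^α)⁻¹ := Real.rpow_neg hr0.le α
    have h3 : (0:ℝ) < r^α := Real.rpow_pos_of_pos hr0 α
    rw [hs, h2, ← div_eq_mul_inv, div_lt_one h3]
    exact h1
  have hB0 : 0 < B := by rw [hBdef]; linarith
  -- rewrite the function as a radial one and compute its lap
  have hδ2 : δ^2 < ‖x‖^2 := by
    apply pow_lt_pow_left₀ hx hδ.le; norm_num
  have hbase : ∀ t : ℝ, δ^2 < t → 1 - δ^α * t ^ (-(α/2)) ≠ 0 :=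
    fun t ht => (base_pos δ α t hδ hα ht).ne'
  have hlap : lap (fun y => C * ‖y‖ ^ (-Θ)
        * (1 - (δ / ‖y‖) ^ α) ^ (1 / Real.sqrt α)) x
      = 4 * ‖x‖^2 * g2fun C (δ^α) (α/2) (-Θ/2) β (‖x‖^2)
        + 2 * N * g1fun C (δ^α) (α/2) (-Θ/2) β (‖x‖^2) := by
    rw [show (fun y : EuclideanSpace ℝ (Fin N) => C * ‖y‖ ^ (-Θ)
        * (1 - (δ / ‖y‖) ^ α) ^ (1 / Real.sqrt α))
      = fun y => C * M (δ^α) (α/2) (-Θ/2) (1 / Real.sqrt α) (‖y‖^2) from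
        funeq N C Θ α δ hδ hα]
    rw [← hβ]
    exact lap_radial _ _ _ (δ^2)
      (fun t ht => hasDerivAt_g C (δ^α) (α/2) (-Θ/2) β t
        (lt_of_le_of_lt (sq_nonneg δ) ht) (hbase t ht))
      (fun t ht => hasDerivAt_g1 C (δ^α) (α/2) (-Θ/2) β t
        (lt_of_le_of_lt (sq_nonneg δ) ht) (hbase t ht)) x hδ2
  rw [hlap, lap_eval N C Θ α β δ r hδ hx hα hβ]
  rw [← hs, ← hBdef]
  -- canonical powers of B
  have hBβ : B^β = B^(β-2) * B^2 := by
    conv_lhs => rw [show β = β-2+2 by ring]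
    rw [Real.rpow_add hB0, Real.rpow_two]
  have hBβ1 : B^(β-1) = B^(β-2) * B := by
    conv_lhs => rw [show β-1 = β-2+1 by ring]
    rw [Real.rpow_add hB0, Real.rpow_one]
  -- the reaction term
  have hrΘ : r^(-Θ) = r^(-Θ-2) * r^2 := by
    conv_lhs => rw [show -Θ = -Θ-2+2 by ring]
    rw [Real.rpow_add hr0, Real.rpow_two]
  have hwq : r ^ θ * (C * r ^ (-Θ) * B^β) ^ q
      = (c^(q-1)*ℓ) * C * r^(-Θ-2) * (B^(β-2) * B^(β*(q-1)+2)) := by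
    have h1 : (C * r ^ (-Θ) * B^β) ^ q = C^q * (r^(-Θ))^q * (B^β)^q := by
      rw [Real.mul_rpow (by positivity) (by positivity),
        Real.mul_rpow (by positivity) (by positivity)]
    have h2 : (r^(-Θ))^q = r^(-Θ*q) := by
      rw [← Real.rpow_mul hr0.le]
    have h3 : (B^β)^q = B^(β*q) := by rw [← Real.rpow_mul hB0.le]
    have h4 : r ^ θ * r^(-Θ*q) = r^(-Θ-2) := by
      rw [← Real.rpow_add hr0]
      congr 1
      have hΘ' : Θ * (q-1) = θ + 2 := by rw [hΘ]; field_simp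
      linear_combination -hΘ'
    have h5 : C^q = (c^(q-1)*ℓ) * C := by
      have h51 : C^q = C^(q-1) * C := by
        conv_lhs => rw [show q = q-1+1 by ring]
        rw [Real.rpow_add hC0, Real.rpow_one]
      have h52 : C^(q-1) = c^(q-1) * ℓ := by
        rw [hC, Real.mul_rpow hc.le (by positivity), ← Real.rpow_mul hℓpos.le,
          show (1/(q-1))*(q-1) = 1 by field_simp, Real.rpow_one]
      rw [h51, h52]
    have h6 : B^(β*q) = B^(β-2) * B^(β*(q-1)+2) := by
      rw [← Real.rpow_add hB0]; congr 1; ring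
    rw [h1, h2, h3, h6]
    calc r ^ θ * (C^q * r^(-Θ*q) * (B^(β-2) * B^(β*(q-1)+2)))
        = C^q * (r ^ θ * r^(-Θ*q)) * (B^(β-2) * B^(β*(q-1)+2)) := by ring
      _ = (c^(q-1)*ℓ) * C * r^(-Θ-2) * (B^(β-2) * B^(β*(q-1)+2)) := by rw [h4, h5]
  have hsval : (δ / r)^α = s := by
    rw [hs, Real.div_rpow hδ.le hr0.le, Real.rpow_neg hr0.le, div_eq_mul_inv]
  rw [hsval, ← hBdef, hwq]
  -- final inequality
  have hBbig : B^(β*(q-1)+2) ≤ B^2 := by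
    have h1 : B ≤ 1 := by rw [hBdef]; linarith
    have h2 : (2:ℝ) ≤ β*(q-1)+2 := by nlinarith
    calc B^(β*(q-1)+2) ≤ B^(2:ℝ) := Real.rpow_le_rpow_of_exponent_ge hB0 h1 h2
      _ = B^2 := Real.rpow_two B
  have hq0 : 0 ≤ c^(q-1)*ℓ := by positivity
  have hquad' := hquad B s hB0.le hs0.le
  have hr2 : (0:ℝ) < r^2 := by positivity
  have hrT : (0:ℝ) < r^(-Θ-2) := Real.rpow_pos_of_pos hr0 _
  have hBT : (0:ℝ) < B^(β-2) := Real.rpow_pos_of_pos hB0 _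
  have hT : c^(q-1)*ℓ*B^(β*(q-1)+2) - ℓ*B^2
      - Real.sqrt α * (((N:ℝ)-2-2*Θ-α))*s*B - α*(1-Real.sqrt α)*s^2 ≤ 0 := by
    have f1 : c^(q-1)*ℓ*B^(β*(q-1)+2) ≤ c^(q-1)*ℓ*B^2 :=
      mul_le_mul_of_nonneg_left hBbig hq0
    linarith [f1, hquad']
  have key : -(C * r^(-Θ-2) * ((Θ^2-((N:ℝ)-2)*Θ) * B^β
        + Real.sqrt α*((N:ℝ)-2-2*Θ-α) * s * B^(β-1)
        + α*(1-Real.sqrt α) * s^2 * B^(β-2)))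
      - lam / r^2 * (C * r^(-Θ) * B^β)
      + (c^(q-1)*ℓ) * C * r^(-Θ-2) * (B^(β-2) * B^(β*(q-1)+2))
      = C * r^(-Θ-2) * B^(β-2) *
        (c^(q-1)*ℓ*B^(β*(q-1)+2) - ℓ*B^2
          - Real.sqrt α * (((N:ℝ)-2-2*Θ-α))*s*B - α*(1-Real.sqrt α)*s^2) := by
    have e : lam / r^2 * (C * (r^(-Θ-2)*r^2) * (B^(β-2)*B^2))
        = lam * C * r^(-Θ-2) * (B^(β-2)*B^2) := by
      field_simp
    rw [hBβ, hBβ1, hrΘ, hℓ, e]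
    ring
  rw [key]
  exact mul_nonpos_of_nonneg_of_nonpos (by positivity) hT

lemma psd (a k cc B s : ℝ) (ha : 0 ≤ a) (hcc : 0 ≤ cc) (h : k^2 ≤ 4*a*cc)
    (hB : 0 ≤ B) (hs : 0 ≤ s) : 0 ≤ a*B^2 + k*s*B + cc*s^2 := by
  rcases eq_or_lt_of_le ha with h0 | hapos
  · have hk : k = 0 := by nlinarith
    rw [← h0, hk]
    have : (0:ℝ) ≤ cc*s^2 := by positivity
    nlinarith
  · nlinarith [sq_nonneg (2*a*B + k*s), mul_nonneg (mul_nonneg hB hs) hapos.le,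
      mul_nonneg (sub_nonneg.mpr h) (sq_nonneg s)]

-- choose α and cα such that the quadratic form is nonneg for all 0 < c < cα
lemma choice (N : ℕ) (q θ lam Θ ℓ : ℝ) (hq : 1 < q)
    (hcase : ((N : ℝ) - 2) ^ 2 / 4 < lam ∨
      (lam ≤ ((N : ℝ) - 2) ^ 2 / 4 ∧
        θ < (((N : ℝ) - 2) / 2 - Real.sqrt (((N : ℝ) - 2) ^ 2 / 4 - lam)) * (q - 1) - 2))
    (hΘ : Θ = (θ + 2) / (q - 1))
    (hℓ : ℓ = Θ ^ 2 - ((N : ℝ) - 2) * Θ + lam) (hℓpos : 0 < ℓ) :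
    ∃ α ∈ Set.Ioo (0:ℝ) 1, ∃ cα : ℝ, 0 < cα ∧
      ∀ c ∈ Set.Ioo (0:ℝ) cα, ∀ B s : ℝ, 0 ≤ B → 0 ≤ s →
        0 ≤ (1 - c^(q-1))*ℓ*B^2 + Real.sqrt α * (((N:ℝ)-2-2*Θ-α))*s*B
            + α*(1-Real.sqrt α)*s^2 := by
  have hq1 : (0:ℝ) < q - 1 := by linarith
  obtain ⟨K0, hK0⟩ : ∃ k : ℝ, k = (N:ℝ) - 2 - 2*Θ := ⟨_, rfl⟩
  simp only [show (N:ℝ) - 2 - 2*Θ = K0 from hK0.symm]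
  rcases hcase with h1 | h2
  · -- supercritical λ : use PSD
    obtain ⟨ε, hεdef⟩ : ∃ e : ℝ, e = 4*ℓ - K0^2 := ⟨_, rfl⟩
    have hεpos : 0 < ε := by
      have h' : ε = 4*lam - ((N:ℝ)-2)^2 := by rw [hεdef, hK0, hℓ]; ring
      rw [h']; nlinarith [h1]
    obtain ⟨D, hD⟩ : ∃ d : ℝ, d = 2*|K0| + 1 + 4*ℓ := ⟨_, rfl⟩
    have hD0 : 0 < D := by rw [hD]; positivity
    obtain ⟨η, hη⟩ : ∃ h : ℝ, h = ε/(4*D) := ⟨_, rfl⟩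
    have hη0 : 0 < η := by rw [hη]; positivity
    refine ⟨min (1/2) (η^2), ⟨by positivity, lt_of_le_of_lt (min_le_left _ _) (by norm_num)⟩,
      min 1 ((ε/(8*ℓ))^(1/(q-1))), lt_min one_pos (Real.rpow_pos_of_pos (by positivity) _), ?_⟩
    intro c hc B s hB hs
    set α : ℝ := min (1/2) (η^2) with hα
    clear_value α
    have hα0 : 0 < α := by rw [hα]; positivity
    have hα1 : α ≤ 1/2 := by rw [hα]; exact min_le_left _ _
    have hsaη : Real.sqrt α ≤ η := by
      calc Real.sqrt α ≤ Real.sqrt (η^2) := Real.sqrt_le_sqrt (by rw [hα]; exact min_le_right _ _)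
        _ = η := Real.sqrt_sq hη0.le
    have hsa1 : Real.sqrt α ≤ 1 := by
      rw [show (1:ℝ) = Real.sqrt 1 by simp]
      exact Real.sqrt_le_sqrt (by linarith)
    have hsa0 : 0 < Real.sqrt α := Real.sqrt_pos.mpr hα0
    have hsasq : Real.sqrt α * Real.sqrt α = α := Real.mul_self_sqrt hα0.le
    have hαsa : α ≤ Real.sqrt α := by nlinarith
    have hc0 : 0 < c := hc.1
    have hcq0 : 0 ≤ c^(q-1) := Real.rpow_nonneg hc0.le _
    have hcle1 : c^(q-1) ≤ 1 :=
      Real.rpow_le_one hc0.le (le_of_lt (lt_of_lt_of_le hc.2 (min_le_left _ _))) hq1.le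
    have hcε : c^(q-1) ≤ ε/(8*ℓ) := by
      have h8 : (0:ℝ) ≤ ε/(8*ℓ) := by positivity
      have hle : c ≤ (ε/(8*ℓ))^(1/(q-1)) := le_of_lt (lt_of_lt_of_le hc.2 (min_le_right _ _))
      calc c^(q-1) ≤ ((ε/(8*ℓ))^(1/(q-1)))^(q-1) :=
            Real.rpow_le_rpow hc0.le hle hq1.le
        _ = (ε/(8*ℓ))^((1/(q-1))*(q-1)) := by rw [← Real.rpow_mul h8]
        _ = ε/(8*ℓ) := by rw [show (1/(q-1))*(q-1) = 1 by field_simp, Real.rpow_one]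
    -- main PSD condition
    have hpsd : (Real.sqrt α * (K0-α))^2 ≤ 4*((1-c^(q-1))*ℓ)*(α*(1-Real.sqrt α)) := by
      have key : (K0 - α)^2 ≤ 4*((1-c^(q-1))*ℓ)*(1-Real.sqrt α) := by
        have e1 : K0^2 = 4*ℓ - ε := by rw [hεdef]; ring
        have e2 : D * Real.sqrt α ≤ D * η := mul_le_mul_of_nonneg_left hsaη hD0.le
        have e3 : D * η = ε/4 := by rw [hη]; field_simp
        have e4 : -|K0| ≤ K0 := neg_abs_le K0
        have e5 : K0 ≤ |K0| := le_abs_self K0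
        have e6 : 4*ℓ*(c^(q-1)) ≤ 4*ℓ*(ε/(8*ℓ)) := by
          apply mul_le_mul_of_nonneg_left hcε (by positivity)
        have e7 : 4*ℓ*(ε/(8*ℓ)) = ε/2 := by field_simp; ring
        have p1 : (-K0)*α ≤ |K0| * α := mul_le_mul_of_nonneg_right (neg_le_abs K0) hα0.le
        have p2 : |K0| * α ≤ |K0| * Real.sqrt α := mul_le_mul_of_nonneg_left hαsa (abs_nonneg K0)
        have p3 : α*α ≤ Real.sqrt α * 1 :=
          mul_le_mul hαsa (by linarith) hα0.le hsa0.le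
        have p4 : D * Real.sqrt α ≤ ε/4 := by linarith [e2, e3]
        have p5 : 4*ℓ*(c^(q-1)) ≤ ε/2 := by linarith [e6, e7]
        have p6 : 0 ≤ 4*ℓ*((c^(q-1))*(Real.sqrt α)) :=
          mul_nonneg (by positivity) (mul_nonneg hcq0 hsa0.le)
        rw [hD] at p4
        linarith [p1, p2, p3, p4, p5, p6, e1, hεpos]
      calc (Real.sqrt α * (K0-α))^2 = α * (K0-α)^2 := by
            rw [mul_pow, Real.sq_sqrt hα0.le]
        _ ≤ α * (4*((1-c^(q-1))*ℓ)*(1-Real.sqrt α)) :=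
            mul_le_mul_of_nonneg_left key hα0.le
        _ = 4*((1-c^(q-1))*ℓ)*(α*(1-Real.sqrt α)) := by ring
    have := psd ((1-c^(q-1))*ℓ) (Real.sqrt α * (K0-α)) (α*(1-Real.sqrt α)) B s
      (mul_nonneg (by linarith) hℓpos.le)
      (mul_nonneg hα0.le (by linarith)) hpsd hB hs
    linarith [this]
  · -- subcritical λ : K0 > 0
    have hsq : 0 ≤ Real.sqrt (((N:ℝ)-2)^2/4 - lam) := Real.sqrt_nonneg _
    have hΘp : Θ < ((N:ℝ)-2)/2 - Real.sqrt (((N:ℝ)-2)^2/4 - lam) := by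
      rw [hΘ, div_lt_iff₀ hq1]
      nlinarith [h2.2]
    have hK0pos : 0 < K0 := by rw [hK0]; nlinarith [hΘp, hsq]
    refine ⟨min (1/2) (K0/2), ⟨by positivity, lt_of_le_of_lt (min_le_left _ _) (by norm_num)⟩,
      1, one_pos, ?_⟩
    intro c hc B s hB hs
    set α : ℝ := min (1/2) (K0/2) with hα
    clear_value α
    have hα0 : 0 < α := by rw [hα]; positivity
    have hα1 : α ≤ 1/2 := by rw [hα]; exact min_le_left _ _
    have hαK : α ≤ K0/2 := by rw [hα]; exact min_le_right _ _
    have hsa1 : Real.sqrt α ≤ 1 := by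
      rw [show (1:ℝ) = Real.sqrt 1 by simp]
      exact Real.sqrt_le_sqrt (by linarith)
    have hsa0 : 0 ≤ Real.sqrt α := Real.sqrt_nonneg _
    have hcle1 : c^(q-1) ≤ 1 := Real.rpow_le_one hc.1.le hc.2.le hq1.le
    have t1 : 0 ≤ (1 - c^(q-1))*ℓ*B^2 := by
      apply mul_nonneg (mul_nonneg (by linarith) hℓpos.le) (sq_nonneg B)
    have t2 : 0 ≤ Real.sqrt α * (K0-α)*s*B := by
      apply mul_nonneg (mul_nonneg (mul_nonneg hsa0 (by linarith)) hs) hB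
    have t3 : 0 ≤ α*(1-Real.sqrt α)*s^2 := by
      apply mul_nonneg (mul_nonneg hα0.le (by linarith)) (sq_nonneg s)
    linarith


theorem stmt_11 (N : ℕ) (hN : 3 ≤ N) (q θ lam : ℝ) (hq : 1 < q)
    (hcase : ((N : ℝ) - 2) ^ 2 / 4 < lam ∨
      (lam ≤ ((N : ℝ) - 2) ^ 2 / 4 ∧
        θ < (((N : ℝ) - 2) / 2 - Real.sqrt (((N : ℝ) - 2) ^ 2 / 4 - lam)) * (q - 1) - 2))
    (Θ ℓ : ℝ) (hΘ : Θ = (θ + 2) / (q - 1))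
    (hℓ : ℓ = Θ ^ 2 - ((N : ℝ) - 2) * Θ + lam) (hℓpos : 0 < ℓ) :
    ∃ α ∈ Set.Ioo (0 : ℝ) 1, ∃ cα : ℝ, 0 < cα ∧
      ∀ c ∈ Set.Ioo (0 : ℝ) cα, ∀ δ : ℝ, 0 < δ →
        ∀ x : EuclideanSpace ℝ (Fin N), δ < ‖x‖ →
          -lap (fun y => c * ℓ ^ (1 / (q - 1)) * ‖y‖ ^ (-Θ)
                * (1 - (δ / ‖y‖) ^ α) ^ (1 / Real.sqrt α)) x
            - lam / ‖x‖ ^ 2 * (c * ℓ ^ (1 / (q - 1)) * ‖x‖ ^ (-Θ)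
                * (1 - (δ / ‖x‖) ^ α) ^ (1 / Real.sqrt α))
            + ‖x‖ ^ θ * (c * ℓ ^ (1 / (q - 1)) * ‖x‖ ^ (-Θ)
                * (1 - (δ / ‖x‖) ^ α) ^ (1 / Real.sqrt α)) ^ q ≤ 0 := by
  obtain ⟨α, hαIoo, cα, hcα, hquad⟩ := choice N q θ lam Θ ℓ hq hcase hΘ hℓ hℓpos
  refine ⟨α, hαIoo, cα, hcα, ?_⟩
  intro c hc δ hδ x hx
  exact main_est N q θ lam Θ ℓ α c δ hq hΘ hℓ hℓpos hαIoo.1 hαIoo.2 hc.1 hδ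
    (hquad c hc) x hx
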